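/- Budget-violation bound (invoked Khuller–Moss–Naor lemma in the paper's setting): let B > 0 be a budget and let d_1, …, d_{m+1} be distinct candidate datasets such that, writing S_i = {d_1, …, d_i} (with S_0 = ∅), each d_i maximizes the ratio (𝒟(S_{i−1} ∪ {e}) − 𝒟(S_{i−1})) / p(e) over all candidate datasets e ∉ S_{i−1}, each p(d_i) ≤ B, and ∑_{i=1}^{m+1} p(d_i) > B. Then for every set S* of candidate datasets with total price at most B, 𝒟(S_{m+1}) ≥ (1 − 1/e) · 𝒟(S*). -/

import Mathlib

/-- The distinctiveness of a finite set `S` of candidate datasets. -/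
def distinctiveness {α ι : Type*} [DecidableEq α] (f₀ : Finset α) (f : ι → Finset α)
    (S : Finset ι) : ℕ := (f₀ ∪ S.biUnion f).card

lemma distinct_marginal {α ι : Type*} [DecidableEq α] [DecidableEq ι] (f₀ : Finset α)
    (f : ι → Finset α) (S : Finset ι) (e : ι) :
    (distinctiveness f₀ f (insert e S) : ℕ) =
      distinctiveness f₀ f S + (f e \ (f₀ ∪ S.biUnion f)).card := by
  unfold distinctiveness
  rw [Finset.biUnion_insert]
  have h : f₀ ∪ (f e ∪ S.biUnion f) = (f₀ ∪ S.biUnion f) ∪ (f e) := by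
    ac_rfl
  rw [h, add_comm, Finset.card_sdiff_add_card]
  rw [Finset.union_comm]

lemma distinct_mono {α ι : Type*} [DecidableEq α] [DecidableEq ι] (f₀ : Finset α)
    (f : ι → Finset α) {S T : Finset ι} (h : S ⊆ T) :
    distinctiveness f₀ f S ≤ distinctiveness f₀ f T := by
  apply Finset.card_le_card
  exact Finset.union_subset_union le_rfl (Finset.biUnion_subset_biUnion_of_subset_left f h)

lemma distinct_submod {α ι : Type*} [DecidableEq α] [DecidableEq ι] (f₀ : Finset α)
    (f : ι → Finset α) (S T : Finset ι) :
    (distinctiveness f₀ f (S ∪ T) : ℝ) ≤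
      distinctiveness f₀ f S + ∑ e ∈ T, ((distinctiveness f₀ f (insert e S) : ℝ)
        - distinctiveness f₀ f S) := by
  have hterm : ∀ e : ι, (distinctiveness f₀ f (insert e S) : ℝ) - distinctiveness f₀ f S
      = ((f e \ (f₀ ∪ S.biUnion f)).card : ℝ) := by
    intro e
    rw [distinct_marginal f₀ f S e]
    push_cast
    ring
  have h1 : distinctiveness f₀ f (S ∪ T) ≤
      distinctiveness f₀ f S + ∑ e ∈ T, (f e \ (f₀ ∪ S.biUnion f)).card := by
    unfold distinctiveness
    have h2 : f₀ ∪ (S ∪ T).biUnion f = (f₀ ∪ S.biUnion f) ∪ T.biUnion f := by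
      ext x
      simp only [Finset.mem_union, Finset.mem_biUnion]
      constructor
      · rintro (h | ⟨a, (ha | ha), hx⟩)
        exacts [Or.inl (Or.inl h), Or.inl (Or.inr ⟨a, ha, hx⟩), Or.inr ⟨a, ha, hx⟩]
      · rintro ((h | ⟨a, ha, hx⟩) | ⟨a, ha, hx⟩)
        exacts [Or.inl h, Or.inr ⟨a, Or.inl ha, hx⟩, Or.inr ⟨a, Or.inr ha, hx⟩]
    rw [h2]
    calc ((f₀ ∪ S.biUnion f) ∪ T.biUnion f).card
        = (T.biUnion f \ (f₀ ∪ S.biUnion f)).card + (f₀ ∪ S.biUnion f).card := by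
          rw [Finset.card_sdiff_add_card, Finset.union_comm]
      _ ≤ (T.biUnion (fun e => f e \ (f₀ ∪ S.biUnion f))).card + (f₀ ∪ S.biUnion f).card := by
          gcongr
          · intro x hx
            rw [Finset.mem_sdiff] at hx
            obtain ⟨hx1, hx2⟩ := hx
            rw [Finset.mem_biUnion] at hx1 ⊢
            obtain ⟨e, he, hxe⟩ := hx1
            exact ⟨e, he, Finset.mem_sdiff.mpr ⟨hxe, hx2⟩⟩
      _ ≤ (∑ e ∈ T, (f e \ (f₀ ∪ S.biUnion f)).card) + (f₀ ∪ S.biUnion f).card := by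
          gcongr
          exact Finset.card_biUnion_le
      _ = (f₀ ∪ S.biUnion f).card + ∑ e ∈ T, (f e \ (f₀ ∪ S.biUnion f)).card := by ring
  calc (distinctiveness f₀ f (S ∪ T) : ℝ)
      ≤ ((distinctiveness f₀ f S + ∑ e ∈ T, (f e \ (f₀ ∪ S.biUnion f)).card : ℕ) : ℝ) := by
        exact_mod_cast h1
    _ = distinctiveness f₀ f S + ∑ e ∈ T, ((distinctiveness f₀ f (insert e S) : ℝ)
        - distinctiveness f₀ f S) := by
        push_cast
        rw [Finset.sum_congr rfl (fun e _ => (hterm e).symm)]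

/-- Budget-violation bound (Khuller–Moss–Naor lemma in this setting): if distinct
datasets `d 0, …, d m` are chosen greedily by cost-effectiveness ratio
(with `S_i = {d 0, …, d (i−1)}`), each has price at most the budget `B`, and their
total price exceeds `B`, then for every feasible set `S*` (total price ≤ B),
`𝒟(S_{m+1}) ≥ (1 − 1/e) · 𝒟(S*)`. -/
theorem budget_violation_bound {α ι : Type*} [DecidableEq α] [Fintype ι] [DecidableEq ι]
    (f₀ : Finset α) (f : ι → Finset α) (p : ι → ℝ) (hp : ∀ e, 0 < p e)
    (B : ℝ) (hB : 0 < B) (m : ℕ) (d : ℕ → ι) (hinj : Set.InjOn d (Set.Iio (m + 1)))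
    (hgreedy : ∀ i < m + 1, ∀ e : ι, e ∉ (Finset.range i).image d →
      ((distinctiveness f₀ f (insert e ((Finset.range i).image d)) : ℝ) -
          distinctiveness f₀ f ((Finset.range i).image d)) / p e ≤
        ((distinctiveness f₀ f (insert (d i) ((Finset.range i).image d)) : ℝ) -
          distinctiveness f₀ f ((Finset.range i).image d)) / p (d i))
    (hple : ∀ i < m + 1, p (d i) ≤ B)
    (hover : B < ∑ i ∈ Finset.range (m + 1), p (d i))
    (Sstar : Finset ι) (hfeas : ∑ e ∈ Sstar, p e ≤ B) :
    (1 - 1 / Real.exp 1) * (distinctiveness f₀ f Sstar : ℝ) ≤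
      (distinctiveness f₀ f ((Finset.range (m + 1)).image d) : ℝ) := by
  set Sg : ℕ → Finset ι := fun i => (Finset.range i).image d with hSg
  set D : ℕ → ℝ := fun i => (distinctiveness f₀ f (Sg i) : ℝ) with hD
  set OPT : ℝ := (distinctiveness f₀ f Sstar : ℝ) with hOPT
  have hOPTnn : 0 ≤ OPT := Nat.cast_nonneg _
  have hSsucc : ∀ i, Sg (i + 1) = insert (d i) (Sg i) := by
    intro i
    simp [hSg, Finset.range_add_one]
  -- step inequality
  have key : ∀ i < m + 1, OPT - D i ≤ (B / p (d i)) * (D (i + 1) - D i) := by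
    intro i hi
    set r : ℝ := (D (i + 1) - D i) / p (d i) with hr
    have hmono : D i ≤ D (i + 1) := by
      have := distinct_mono f₀ f (S := Sg i) (T := Sg (i + 1))
        (by rw [hSsucc]; exact Finset.subset_insert _ _)
      simp only [hD]
      exact_mod_cast this
    have hrnn : 0 ≤ r := div_nonneg (by linarith) (hp (d i)).le
    have h1 : OPT ≤ D i + ∑ e ∈ Sstar, ((distinctiveness f₀ f (insert e (Sg i)) : ℝ)
        - distinctiveness f₀ f (Sg i)) := by
      have hm : OPT ≤ (distinctiveness f₀ f (Sg i ∪ Sstar) : ℝ) := by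
        have := distinct_mono f₀ f (S := Sstar) (T := Sg i ∪ Sstar) Finset.subset_union_right
        simp only [hOPT]
        exact_mod_cast this
      exact hm.trans (distinct_submod f₀ f (Sg i) Sstar)
    have h2 : ∑ e ∈ Sstar, ((distinctiveness f₀ f (insert e (Sg i)) : ℝ)
        - distinctiveness f₀ f (Sg i)) ≤ ∑ e ∈ Sstar, p e * r := by
      apply Finset.sum_le_sum
      intro e _
      by_cases he : e ∈ Sg i
      · rw [Finset.insert_eq_self.mpr he]
        simp only [sub_self]
        exact mul_nonneg (hp e).le hrnn
      · have hg := hgreedy i hi e he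
        have hrw : ((distinctiveness f₀ f (insert (d i) (Sg i)) : ℝ)
            - distinctiveness f₀ f (Sg i)) / p (d i) = r := by
          simp only [hr, hD, hSsucc i]
        rw [hrw] at hg
        calc (distinctiveness f₀ f (insert e (Sg i)) : ℝ) - distinctiveness f₀ f (Sg i)
            = (((distinctiveness f₀ f (insert e (Sg i)) : ℝ)
                - distinctiveness f₀ f (Sg i)) / p e) * p e :=
              (div_mul_cancel₀ _ (hp e).ne').symm
          _ ≤ r * p e := by
              apply mul_le_mul_of_nonneg_right hg (hp e).le
          _ = p e * r := by ring
    have h3 : ∑ e ∈ Sstar, p e * r ≤ B * r := by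
      rw [← Finset.sum_mul]
      exact mul_le_mul_of_nonneg_right hfeas hrnn
    have h4 : B * r = (B / p (d i)) * (D (i + 1) - D i) := by
      rw [hr]
      field_simp
    linarith
  -- recursion
  have hrec : ∀ i < m + 1, OPT - D (i + 1) ≤ (1 - p (d i) / B) * (OPT - D i) := by
    intro i hi
    have hk := key i hi
    have hpi := hp (d i)
    have h5 : (p (d i) / B) * (OPT - D i) ≤ D (i + 1) - D i := by
      have := mul_le_mul_of_nonneg_left hk (le_of_lt (div_pos hpi hB))
      calc (p (d i) / B) * (OPT - D i)
          ≤ (p (d i) / B) * ((B / p (d i)) * (D (i + 1) - D i)) := this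
        _ = D (i + 1) - D i := by field_simp
    nlinarith
  -- induction
  have ind : ∀ k, k ≤ m + 1 → OPT - D k ≤ OPT * ∏ i ∈ Finset.range k, (1 - p (d i) / B) := by
    intro k
    induction k with
    | zero =>
      intro _
      simp only [Finset.range_zero, Finset.prod_empty, mul_one]
      have : (0 : ℝ) ≤ D 0 := Nat.cast_nonneg _
      linarith
    | succ n ih =>
      intro hn
      have hn' : n < m + 1 := hn
      have hfac : 0 ≤ 1 - p (d n) / B := by
        have := hple n hn'
        have : p (d n) / B ≤ 1 := (div_le_one hB).mpr this
        linarith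
      calc OPT - D (n + 1) ≤ (1 - p (d n) / B) * (OPT - D n) := hrec n hn'
        _ ≤ (1 - p (d n) / B) * (OPT * ∏ i ∈ Finset.range n, (1 - p (d i) / B)) := by
            apply mul_le_mul_of_nonneg_left (ih (le_of_lt hn')) hfac
        _ = OPT * ∏ i ∈ Finset.range (n + 1), (1 - p (d i) / B) := by
            rw [Finset.prod_range_succ]; ring
  have hprod : ∏ i ∈ Finset.range (m + 1), (1 - p (d i) / B) ≤ Real.exp (-1) := by
    have h6 : ∏ i ∈ Finset.range (m + 1), (1 - p (d i) / B)
        ≤ ∏ i ∈ Finset.range (m + 1), Real.exp (-(p (d i) / B)) := by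
      apply Finset.prod_le_prod
      · intro i hi
        have := hple i (Finset.mem_range.mp hi)
        have : p (d i) / B ≤ 1 := (div_le_one hB).mpr this
        linarith
      · intro i _
        have := Real.add_one_le_exp (-(p (d i) / B))
        linarith
    have h7 : ∏ i ∈ Finset.range (m + 1), Real.exp (-(p (d i) / B))
        = Real.exp (∑ i ∈ Finset.range (m + 1), -(p (d i) / B)) := (Real.exp_sum _ _).symm
    have h8 : ∑ i ∈ Finset.range (m + 1), -(p (d i) / B) ≤ -1 := by
      have : ∑ i ∈ Finset.range (m + 1), -(p (d i) / B)
          = -((∑ i ∈ Finset.range (m + 1), p (d i)) / B) := by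
        rw [Finset.sum_div]
        exact Finset.sum_neg_distrib _
      rw [this]
      have : 1 ≤ (∑ i ∈ Finset.range (m + 1), p (d i)) / B := by
        rw [le_div_iff₀ hB]
        linarith
      linarith
    calc ∏ i ∈ Finset.range (m + 1), (1 - p (d i) / B)
        ≤ Real.exp (∑ i ∈ Finset.range (m + 1), -(p (d i) / B)) := by rw [← h7]; exact h6
      _ ≤ Real.exp (-1) := Real.exp_le_exp.mpr h8
  have hfin : OPT - D (m + 1) ≤ OPT * Real.exp (-1) :=
    (ind (m + 1) le_rfl).trans (mul_le_mul_of_nonneg_left hprod hOPTnn)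
  have hexp : Real.exp (-1) = 1 / Real.exp 1 := by
    rw [Real.exp_neg, one_div]
  rw [hexp] at hfin
  have : D (m + 1) = (distinctiveness f₀ f ((Finset.range (m + 1)).image d) : ℝ) := rfl
  rw [← this]
  nlinarith
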